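/- arXiv:1008.3691 — 4 statements merged into one kernel-verified Lean document; each statement's English description precedes it below -/
import Mathlib

section
/- Let r, w, t, d, d₀ be positive integers with w ≤ r and t ≥ r + w, and suppose d satisfies d · |E(I_t(r,w))| = B(I_t(r,w)) · t!. Then N((r,w; d₀·d), t) = d₀ · t!. -/
/-- `B : Fin t → Finset (Fin n)` is an (r,w;d)-cover-free family: for any disjoint
index sets `L, M` with `|L| = r`, `|M| = w`, the intersection of the blocks in `L`
has at least `d` elements outside the union of the blocks in `M`. -/
def IsCFF (r w d n t : ℕ) (B : Fin t → Finset (Fin n)) : Prop :=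
  ∀ L M : Finset (Fin t), Disjoint L M → L.card = r → M.card = w →
    d ≤ ((L.inf B) \ (M.sup B)).card

/-- `Ncff r w d t` = `N((r,w;d),t)`, the minimum number of points of an
(r,w;d)-CFF with `t` blocks, with the convention that it equals 1 if `r = 0` or `w = 0`. -/
noncomputable def Ncff (r w d t : ℕ) : ℕ :=
  if r = 0 ∨ w = 0 then 1
  else sInf {n : ℕ | ∃ B : Fin t → Finset (Fin n), IsCFF r w d n t B}
/-- The bi-intersection graph `I_t(r,w)`: a bipartite graph whose left vertices are
the `r`-subsets of `[t]` and right vertices are the `w`-subsets of `[t]`, with an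
`r`-subset adjacent to a `w`-subset iff they are disjoint. -/
def biIntGraph (t r w : ℕ) : SimpleGraph (Finset (Fin t) ⊕ Finset (Fin t)) :=
  SimpleGraph.fromRel (fun a b =>
    ∃ A B : Finset (Fin t), a = Sum.inl A ∧ b = Sum.inr B ∧
      A.card = r ∧ B.card = w ∧ Disjoint A B)

/-- `maxBicliqueEdges G` = `B(G)`, the maximum number of edges among the bicliques
of `G`. -/
noncomputable def maxBicliqueEdges {V : Type*} (G : SimpleGraph V) : ℕ :=
  sSup {m : ℕ | ∃ X Y : Finset V, Disjoint X Y ∧ (∀ x ∈ X, ∀ y ∈ Y, G.Adj x y) ∧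
    m = X.card * Y.card}

open Finset

variable {t r w : ℕ}

lemma adj_inl_inr {A B : Finset (Fin t)} :
    (biIntGraph t r w).Adj (Sum.inl A) (Sum.inr B) ↔ A.card = r ∧ B.card = w ∧ Disjoint A B := by
  simp [biIntGraph, SimpleGraph.fromRel_adj]

lemma adj_structure {a b : Finset (Fin t) ⊕ Finset (Fin t)} (h : (biIntGraph t r w).Adj a b) :
    ∃ A B : Finset (Fin t), A.card = r ∧ B.card = w ∧ Disjoint A B ∧
      ((a = Sum.inl A ∧ b = Sum.inr B) ∨ (a = Sum.inr B ∧ b = Sum.inl A)) := by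
  rw [biIntGraph, SimpleGraph.fromRel_adj] at h
  obtain ⟨-, h | h⟩ := h <;> obtain ⟨A, B, h1, h2, h3, h4, h5⟩ := h
  · exact ⟨A, B, h3, h4, h5, Or.inl ⟨h1, h2⟩⟩
  · exact ⟨A, B, h3, h4, h5, Or.inr ⟨h2, h1⟩⟩

def pairsP (t r w : ℕ) : Finset (Finset (Fin t) × Finset (Fin t)) :=
  Finset.univ.filter (fun p => p.1.card = r ∧ p.2.card = w ∧ Disjoint p.1 p.2)

lemma mem_pairsP {p : Finset (Fin t) × Finset (Fin t)} :
    p ∈ pairsP t r w ↔ p.1.card = r ∧ p.2.card = w ∧ Disjoint p.1 p.2 := by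
  simp [pairsP]

lemma card_edgeSet_eq : Nat.card (biIntGraph t r w).edgeSet = (pairsP t r w).card := by
  rw [← Nat.card_eq_finsetCard]
  refine Nat.card_congr (Equiv.symm (Equiv.ofBijective
    (fun e => ⟨s(Sum.inl e.1.1, Sum.inr e.1.2), by
      obtain ⟨p, hp⟩ := e
      rw [mem_pairsP] at hp
      exact (SimpleGraph.mem_edgeSet _).2 (adj_inl_inr.2 hp)⟩) ⟨?_, ?_⟩))
  · rintro ⟨p, hp⟩ ⟨q, hq⟩ h
    simp only [Subtype.mk.injEq, Sym2.eq, Sym2.rel_iff', Prod.mk.injEq,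
      Sum.inl.injEq, Sum.inr.injEq, reduceCtorEq, false_and, and_false, or_false,
      Prod.swap_prod_mk, Prod.mk.injEq] at h
    exact Subtype.ext (Prod.ext h.1 h.2)
  · rintro ⟨e, he⟩
    induction e using Sym2.ind with
    | _ a b =>
      have h : (biIntGraph t r w).Adj a b := (SimpleGraph.mem_edgeSet _).1 he
      obtain ⟨A, B, h1, h2, h3, hab⟩ := adj_structure h
      rcases hab with ⟨ha, hb⟩ | ⟨ha, hb⟩
      · exact ⟨⟨(A, B), mem_pairsP.2 ⟨h1, h2, h3⟩⟩, by simp [ha, hb]⟩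
      · exact ⟨⟨(A, B), mem_pairsP.2 ⟨h1, h2, h3⟩⟩, by
          simp only [Subtype.mk.injEq, ha, hb]
          exact Sym2.eq_swap⟩

lemma cross_bound (𝒜 ℬ : Finset (Finset (Fin t)))
    (hA : ∀ A ∈ 𝒜, A.card = r) (hB : ∀ B ∈ ℬ, B.card = w)
    (hdis : ∀ A ∈ 𝒜, ∀ B ∈ ℬ, Disjoint A B) :
    ∃ k ≤ t, 𝒜.card * ℬ.card ≤ (t - k).choose r * k.choose w := by
  classical
  set T : Finset (Fin t) := ℬ.sup id with hT
  refine ⟨T.card, by simpa using T.card_le_univ, ?_⟩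
  have h1 : ℬ ⊆ powersetCard w T := by
    intro B hBmem
    rw [mem_powersetCard]
    exact ⟨le_sup (f := id) hBmem, hB B hBmem⟩
  have h2 : 𝒜 ⊆ powersetCard r Tᶜ := by
    intro A hAmem
    rw [mem_powersetCard]
    refine ⟨?_, hA A hAmem⟩
    rw [subset_compl_comm]
    intro x hx
    rw [mem_compl]
    intro hxa
    obtain ⟨B, hBm, hxB⟩ := mem_sup.1 hx
    exact absurd hxB (Finset.disjoint_left.1 (hdis A hAmem B hBm) hxa)
  have c1 : ℬ.card ≤ T.card.choose w := by
    simpa [card_powersetCard] using card_le_card h1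
  have c2 : 𝒜.card ≤ (t - T.card).choose r := by
    have := card_le_card h2
    rwa [card_powersetCard, card_compl, Fintype.card_fin] at this
  exact Nat.mul_le_mul c2 c1

lemma cross_of_biclique (X Y : Finset (Finset (Fin t) ⊕ Finset (Fin t)))
    (hadj : ∀ x ∈ X, ∀ y ∈ Y, (biIntGraph t r w).Adj x y)
    (hX : ∀ x ∈ X, ∃ A, x = Sum.inl A) (hY : ∀ y ∈ Y, ∃ B, y = Sum.inr B)
    (hYne : Y.Nonempty) (hXne : X.Nonempty) :
    ∃ k ≤ t, X.card * Y.card ≤ (t - k).choose r * k.choose w := by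
  classical
  set e : Finset (Fin t) ⊕ Finset (Fin t) → Finset (Fin t) := Sum.elim id id with he
  set 𝒜 := X.image e with h𝒜
  set ℬ := Y.image e with hℬ
  have memA : ∀ A, A ∈ 𝒜 ↔ Sum.inl A ∈ X := by
    intro A
    constructor
    · rintro hA
      obtain ⟨x, hx, hxe⟩ := mem_image.1 hA
      obtain ⟨A', rfl⟩ := hX x hx
      simpa [he] using hxe ▸ hx
    · intro h
      exact mem_image.2 ⟨Sum.inl A, h, rfl⟩
  have memB : ∀ B, B ∈ ℬ ↔ Sum.inr B ∈ Y := by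
    intro B
    constructor
    · rintro hB
      obtain ⟨y, hy, hye⟩ := mem_image.1 hB
      obtain ⟨B', rfl⟩ := hY y hy
      simpa [he] using hye ▸ hy
    · intro h
      exact mem_image.2 ⟨Sum.inr B, h, rfl⟩
  have cA : 𝒜.card = X.card := by
    apply card_image_of_injOn
    intro x hx y hy hxy
    obtain ⟨A, rfl⟩ := hX x hx
    obtain ⟨A', rfl⟩ := hX y hy
    simpa [he] using hxy
  have cB : ℬ.card = Y.card := by
    apply card_image_of_injOn
    intro x hx y hy hxy
    obtain ⟨B, rfl⟩ := hY x hx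
    obtain ⟨B', rfl⟩ := hY y hy
    simpa [he] using hxy
  have key : ∀ A ∈ 𝒜, ∀ B ∈ ℬ, A.card = r ∧ B.card = w ∧ Disjoint A B := by
    intro A hA B hB
    exact adj_inl_inr.1 (hadj _ ((memA A).1 hA) _ ((memB B).1 hB))
  obtain ⟨B₀, hB₀⟩ := hYne
  obtain ⟨A₀, hA₀⟩ := hXne
  have hB₀' : e B₀ ∈ ℬ := mem_image_of_mem e hB₀
  have hA₀' : e A₀ ∈ 𝒜 := mem_image_of_mem e hA₀
  rw [← cA, ← cB]
  exact cross_bound 𝒜 ℬ (fun A hA => (key A hA _ hB₀').1)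
    (fun B hB => (key _ hA₀' B hB).2.1) (fun A hA B hB => (key A hA B hB).2.2)

lemma biclique_bound (X Y : Finset (Finset (Fin t) ⊕ Finset (Fin t)))
    (hadj : ∀ x ∈ X, ∀ y ∈ Y, (biIntGraph t r w).Adj x y) :
    ∃ k ≤ t, X.card * Y.card ≤ (t - k).choose r * k.choose w := by
  classical
  rcases X.eq_empty_or_nonempty with rfl | hXne
  · exact ⟨0, Nat.zero_le t, by simp⟩
  rcases Y.eq_empty_or_nonempty with rfl | hYne
  · exact ⟨0, Nat.zero_le t, by simp⟩
  obtain ⟨x₀, hx₀⟩ := hXne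
  obtain ⟨y₀, hy₀⟩ := hYne
  obtain ⟨A₀, B₀, -, -, -, hc⟩ := adj_structure (hadj x₀ hx₀ y₀ hy₀)
  rcases hc with ⟨hx, hy⟩ | ⟨hx, hy⟩
  · -- X all inl, Y all inr
    refine cross_of_biclique X Y hadj ?_ ?_ ⟨y₀, hy₀⟩ ⟨x₀, hx₀⟩
    · intro x hx'
      obtain ⟨A, B, -, -, -, hcc⟩ := adj_structure (hadj x hx' y₀ hy₀)
      rcases hcc with ⟨h1, -⟩ | ⟨-, h2⟩
      · exact ⟨A, h1⟩
      · rw [hy] at h2; exact absurd h2 (by simp)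
    · intro y hy'
      obtain ⟨A, B, -, -, -, hcc⟩ := adj_structure (hadj x₀ hx₀ y hy')
      rcases hcc with ⟨-, h2⟩ | ⟨h1, -⟩
      · exact ⟨B, h2⟩
      · rw [hx] at h1; exact absurd h1 (by simp)
  · -- X all inr, Y all inl: swap roles
    have f1 : ∀ y ∈ Y, ∃ A, y = Sum.inl A := by
      intro y hy'
      obtain ⟨A, B, -, -, -, hcc⟩ := adj_structure (hadj x₀ hx₀ y hy')
      rcases hcc with ⟨h1, -⟩ | ⟨-, h2⟩
      · rw [hx] at h1; exact absurd h1 (by simp)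
      · exact ⟨A, h2⟩
    have f2 : ∀ x ∈ X, ∃ B, x = Sum.inr B := by
      intro x hx'
      obtain ⟨A, B, -, -, -, hcc⟩ := adj_structure (hadj x hx' y₀ hy₀)
      rcases hcc with ⟨-, h2⟩ | ⟨h1, -⟩
      · rw [hy] at h2; exact absurd h2 (by simp)
      · exact ⟨B, h1⟩
    obtain ⟨k, hk, hle⟩ := cross_of_biclique Y X
      (fun y hy' x hx' => (hadj x hx' y hy').symm) f1 f2 ⟨x₀, hx₀⟩ ⟨y₀, hy₀⟩
    exact ⟨k, hk, by rwa [Nat.mul_comm X.card]⟩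

def bicliqueSet {V : Type*} (G : SimpleGraph V) : Set ℕ :=
  {m : ℕ | ∃ X Y : Finset V, Disjoint X Y ∧ (∀ x ∈ X, ∀ y ∈ Y, G.Adj x y) ∧
    m = X.card * Y.card}

lemma maxBicliqueEdges_eq {V : Type*} (G : SimpleGraph V) :
    maxBicliqueEdges G = sSup (bicliqueSet G) := rfl

lemma bddAbove_bicliqueSet {V : Type*} [Fintype V] (G : SimpleGraph V) :
    BddAbove (bicliqueSet G) := by
  classical
  refine ⟨Fintype.card V * Fintype.card V, ?_⟩
  rintro m ⟨X, Y, -, -, rfl⟩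
  exact Nat.mul_le_mul (Finset.card_le_univ X |>.trans_eq (Finset.card_univ))
    (Finset.card_le_univ Y |>.trans_eq (Finset.card_univ))

lemma le_maxBicliqueEdges {V : Type*} [Fintype V] (G : SimpleGraph V) {m : ℕ}
    (hm : m ∈ bicliqueSet G) : m ≤ maxBicliqueEdges G :=
  le_csSup (bddAbove_bicliqueSet G) hm

lemma maxBicliqueEdges_mem {V : Type*} [Fintype V] (G : SimpleGraph V) :
    maxBicliqueEdges G ∈ bicliqueSet G := by
  classical
  apply Nat.sSup_mem (⟨0, ∅, ∅, by simp, by simp, by simp⟩ : (bicliqueSet G).Nonempty)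
  obtain ⟨c, hc⟩ := bddAbove_bicliqueSet G
  exact ⟨c, fun x hx => hc hx⟩

lemma choose_le_max (k : ℕ) (hk : k ≤ t) :
    (t - k).choose r * k.choose w ≤ maxBicliqueEdges (biIntGraph t r w) := by
  classical
  obtain ⟨S, -, hS⟩ := Finset.exists_subset_card_eq (by simpa using hk :
    k ≤ (Finset.univ : Finset (Fin t)).card)
  apply le_maxBicliqueEdges
  refine ⟨(powersetCard r Sᶜ).image Sum.inl, (powersetCard w S).image Sum.inr, ?_, ?_, ?_⟩
  · rw [disjoint_left]
    rintro a ha hb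
    obtain ⟨A, -, rfl⟩ := mem_image.1 ha
    obtain ⟨B, -, hB⟩ := mem_image.1 hb
    exact absurd hB (by simp)
  · rintro x hx y hy
    obtain ⟨A, hA, rfl⟩ := mem_image.1 hx
    obtain ⟨B, hB, rfl⟩ := mem_image.1 hy
    rw [mem_powersetCard] at hA hB
    refine adj_inl_inr.2 ⟨hA.2, hB.2, ?_⟩
    have : Disjoint (Sᶜ) S := disjoint_compl_left
    exact this.mono hA.1 hB.1
  · rw [card_image_of_injective _ Sum.inl_injective,
      card_image_of_injective _ Sum.inr_injective, card_powersetCard, card_powersetCard,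
      card_compl, Fintype.card_fin, hS]

lemma exists_max_k : ∃ k ≤ t,
    maxBicliqueEdges (biIntGraph t r w) = (t - k).choose r * k.choose w := by
  classical
  obtain ⟨X, Y, -, hadj, hXY⟩ := maxBicliqueEdges_mem (biIntGraph t r w)
  obtain ⟨k, hk, hle⟩ := biclique_bound X Y hadj
  exact ⟨k, hk, le_antisymm (hXY ▸ hle) (choose_le_max k hk)⟩

open Equiv in
lemma exists_perm_map {L M L' M' : Finset (Fin t)} (h1 : Disjoint L M) (h2 : Disjoint L' M')
    (hL : L.card = L'.card) (hM : M.card = M'.card) :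
    ∃ σ : Equiv.Perm (Fin t), (∀ x, x ∈ L ↔ σ x ∈ L') ∧ (∀ x, x ∈ M ↔ σ x ∈ M') := by
  classical
  have hC : ((L ∪ M)ᶜ : Finset (Fin t)).card = ((L' ∪ M')ᶜ : Finset (Fin t)).card := by
    rw [card_compl, card_compl, card_union_of_disjoint h1, card_union_of_disjoint h2, hL, hM]
  set eL := Finset.equivOfCardEq hL with heL
  set eM := Finset.equivOfCardEq hM with heM
  set eC := Finset.equivOfCardEq hC with heC
  set g : Fin t → Fin t := fun x =>
    if h : x ∈ L then (eL ⟨x, h⟩ : Fin t)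
    else if h' : x ∈ M then (eM ⟨x, h'⟩ : Fin t)
    else (eC ⟨x, by simp [h, h']⟩ : Fin t) with hg
  have gL : ∀ x (h : x ∈ L), g x = (eL ⟨x, h⟩ : Fin t) := by
    intro x h; simp [hg, h]
  have gM : ∀ x (h : x ∉ L) (h' : x ∈ M), g x = (eM ⟨x, h'⟩ : Fin t) := by
    intro x h h'; simp [hg, h, h']
  have gC : ∀ x (h : x ∉ L) (h' : x ∉ M), g x = (eC ⟨x, by simp [h, h']⟩ : Fin t) := by
    intro x h h'; simp [hg, h, h']
  have memtype : ∀ x, (x ∈ L ∧ g x ∈ L') ∨ (x ∈ M ∧ g x ∈ M') ∨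
      (x ∉ L ∧ x ∉ M ∧ g x ∉ L' ∧ g x ∉ M') := by
    intro x
    by_cases h : x ∈ L
    · exact Or.inl ⟨h, by rw [gL x h]; exact (eL ⟨x, h⟩).2⟩
    by_cases h' : x ∈ M
    · exact Or.inr (Or.inl ⟨h', by rw [gM x h h']; exact (eM ⟨x, h'⟩).2⟩)
    · refine Or.inr (Or.inr ⟨h, h', ?_, ?_⟩)
      · rw [gC x h h']
        have := (eC ⟨x, by simp [h, h']⟩).2
        rw [mem_compl, mem_union] at this
        exact fun hc => this (Or.inl hc)
      · rw [gC x h h']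
        have := (eC ⟨x, by simp [h, h']⟩).2
        rw [mem_compl, mem_union] at this
        exact fun hc => this (Or.inr hc)
  have hinj : Function.Injective g := by
    intro x y hxy
    rcases memtype x with ⟨hx, hgx⟩ | ⟨hx, hgx⟩ | ⟨hx1, hx2, hgx1, hgx2⟩ <;>
      rcases memtype y with ⟨hy, hgy⟩ | ⟨hy, hgy⟩ | ⟨hy1, hy2, hgy1, hgy2⟩
    · rw [gL x hx, gL y hy] at hxy
      have := eL.injective (Subtype.ext hxy)
      exact congrArg Subtype.val this
    · exact absurd hgx (hxy ▸ fun hc => (disjoint_left.1 h2) hc hgy)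
    · exact absurd (hxy ▸ hgx) hgy1
    · have hx' : g x ∈ L' := hxy.symm ▸ hgy
      exact ((disjoint_left.1 h2) hx' hgx).elim
    · rw [gM x (fun hc => (disjoint_left.1 h1) hc hx) hx,
        gM y (fun hc => (disjoint_left.1 h1) hc hy) hy] at hxy
      have := eM.injective (Subtype.ext hxy)
      exact congrArg Subtype.val this
    · exact absurd (hxy ▸ hgx) hgy2
    · exact absurd (hxy.symm ▸ hgy) hgx1
    · exact absurd (hxy.symm ▸ hgy) hgx2
    · rw [gC x hx1 hx2, gC y hy1 hy2] at hxy
      have := eC.injective (Subtype.ext hxy)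
      exact congrArg Subtype.val this
  refine ⟨Equiv.ofBijective g (Finite.injective_iff_bijective.1 hinj), ?_, ?_⟩
  · intro x
    simp only [Equiv.ofBijective_apply]
    constructor
    · intro hx
      rcases memtype x with ⟨_, hgx⟩ | ⟨hx', _⟩ | ⟨hx1, _, _, _⟩
      · exact hgx
      · exact absurd hx (fun hc => (disjoint_left.1 h1) hc hx')
      · exact absurd hx hx1
    · intro hgx
      rcases memtype x with ⟨hx, _⟩ | ⟨_, hgx'⟩ | ⟨_, _, hgx1, _⟩
      · exact hx
      · exact absurd hgx (fun hc => (disjoint_left.1 h2) hc hgx')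
      · exact absurd hgx hgx1
  · intro x
    simp only [Equiv.ofBijective_apply]
    constructor
    · intro hx
      rcases memtype x with ⟨hx', _⟩ | ⟨_, hgx⟩ | ⟨_, hx2, _, _⟩
      · exact absurd hx (fun hc => (disjoint_left.1 h1) hx' hc)
      · exact hgx
      · exact absurd hx hx2
    · intro hgx
      rcases memtype x with ⟨_, hgx'⟩ | ⟨hx, _⟩ | ⟨_, _, _, hgx2⟩
      · exact absurd hgx (fun hc => (disjoint_left.1 h2) hgx' hc)
      · exact hx
      · exact absurd hgx hgx2

noncomputable def countS {t : ℕ} (S L M : Finset (Fin t)) : ℕ :=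
  (Finset.univ.filter
    (fun π : Equiv.Perm (Fin t) => (∀ l ∈ L, π l ∉ S) ∧ (∀ m ∈ M, π m ∈ S))).card

lemma countS_const (S : Finset (Fin t)) {L M L' M' : Finset (Fin t)}
    (h1 : Disjoint L M) (h2 : Disjoint L' M') (hL : L.card = L'.card)
    (hM : M.card = M'.card) : countS S L M = countS S L' M' := by
  classical
  obtain ⟨σ, hσL, hσM⟩ := exists_perm_map h1 h2 hL hM
  have hinv : ∀ x, σ (σ⁻¹ x) = x := fun x => σ.apply_symm_apply x
  apply card_nbij' (i := fun π => π * σ⁻¹) (j := fun π => π * σ)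
  · intro π hπ
    rw [mem_coe, mem_filter] at hπ ⊢
    obtain ⟨-, hπ1, hπ2⟩ := hπ
    refine ⟨mem_univ _, ?_, ?_⟩
    · intro l hl
      have : σ⁻¹ l ∈ L := (hσL (σ⁻¹ l)).2 (by rw [hinv]; exact hl)
      simpa [Equiv.Perm.mul_apply] using hπ1 _ this
    · intro m hm
      have : σ⁻¹ m ∈ M := (hσM (σ⁻¹ m)).2 (by rw [hinv]; exact hm)
      simpa [Equiv.Perm.mul_apply] using hπ2 _ this
  · intro π hπ
    rw [mem_coe, mem_filter] at hπ ⊢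
    obtain ⟨-, hπ1, hπ2⟩ := hπ
    refine ⟨mem_univ _, ?_, ?_⟩
    · intro l hl
      have : σ l ∈ L' := (hσL l).1 hl
      simpa [Equiv.Perm.mul_apply] using hπ1 _ this
    · intro m hm
      have : σ m ∈ M' := (hσM m).1 hm
      simpa [Equiv.Perm.mul_apply] using hπ2 _ this
  · intro π _
    simp [mul_assoc]
  · intro π _
    simp [mul_assoc]

lemma sum_countS (S : Finset (Fin t)) :
    ∑ p ∈ pairsP t r w, countS S p.1 p.2
      = t.factorial * ((t - S.card).choose r * S.card.choose w) := by
  classical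
  have key : ∀ π : Equiv.Perm (Fin t),
      (pairsP t r w).filter (fun p => (∀ l ∈ p.1, π l ∉ S) ∧ (∀ m ∈ p.2, π m ∈ S))
        = powersetCard r (Finset.univ.filter fun i => π i ∉ S) ×ˢ
          powersetCard w (Finset.univ.filter fun i => π i ∈ S) := by
    intro π
    ext p
    rw [mem_filter, mem_pairsP, Finset.mem_product, mem_powersetCard, mem_powersetCard]
    constructor
    · rintro ⟨⟨hc1, hc2, -⟩, hq1, hq2⟩
      exact ⟨⟨fun x hx => by simp [hq1 x hx], hc1⟩, ⟨fun x hx => by simp [hq2 x hx], hc2⟩⟩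
    · rintro ⟨⟨hs1, hc1⟩, hs2, hc2⟩
      have hd : Disjoint p.1 p.2 := by
        rw [disjoint_left]
        intro a ha hb
        have h1 := hs1 ha
        have h2 := hs2 hb
        simp only [mem_filter] at h1 h2
        exact h1.2 h2.2
      exact ⟨⟨hc1, hc2, hd⟩, fun x hx => by simpa using (hs1 hx),
        fun x hx => by simpa using (hs2 hx)⟩
  have cardV : ∀ π : Equiv.Perm (Fin t),
      (Finset.univ.filter fun i => π i ∈ S).card = S.card := by
    intro π
    have himg : (Finset.univ.filter fun i => π i ∈ S) = S.image π.symm := by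
      ext x
      simp only [mem_filter, mem_univ, true_and, mem_image]
      constructor
      · intro h; exact ⟨π x, h, π.symm_apply_apply x⟩
      · rintro ⟨s, hs, rfl⟩; simpa using hs
    rw [himg, card_image_of_injective _ π.symm.injective]
  have cardU : ∀ π : Equiv.Perm (Fin t),
      (Finset.univ.filter fun i => π i ∉ S).card = t - S.card := by
    intro π
    have hcompl : (Finset.univ.filter fun i => π i ∉ S)
        = (Finset.univ.filter fun i => π i ∈ S)ᶜ := by
      ext x; simp
    rw [hcompl, card_compl, Fintype.card_fin, cardV]
  unfold countS
  simp_rw [Finset.card_filter]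
  rw [Finset.sum_comm]
  have : ∀ π : Equiv.Perm (Fin t),
      (∑ p ∈ pairsP t r w, if (∀ l ∈ p.1, π l ∉ S) ∧ (∀ m ∈ p.2, π m ∈ S) then 1 else 0)
        = (t - S.card).choose r * S.card.choose w := by
    intro π
    rw [← Finset.card_filter, key π, Finset.card_product, card_powersetCard,
      card_powersetCard, cardU, cardV]
  rw [Finset.sum_congr rfl (fun π _ => this π), Finset.sum_const, card_univ,
    Fintype.card_perm, Fintype.card_fin, smul_eq_mul]

lemma exists_cff (S : Finset (Fin t)) (d₀ : ℕ) :
    ∃ B : Fin t → Finset (Fin (d₀ * t.factorial)),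
      ∀ L M : Finset (Fin t), ((L.inf B) \ (M.sup B)).card = d₀ * countS S L M := by
  classical
  have hcard : Fintype.card (Fin (d₀ * t.factorial))
      = Fintype.card (Fin d₀ × Equiv.Perm (Fin t)) := by
    simp [Fintype.card_perm]
  set ψ := Fintype.equivOfCardEq hcard with hψ
  refine ⟨fun i => Finset.univ.filter (fun x => (ψ x).2 i ∉ S), ?_⟩
  intro L M
  have hchar : (L.inf (fun i => Finset.univ.filter (fun x => (ψ x).2 i ∉ S)))
      \ (M.sup (fun i => Finset.univ.filter (fun x => (ψ x).2 i ∉ S)))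
      = Finset.univ.filter
          (fun x => (∀ l ∈ L, (ψ x).2 l ∉ S) ∧ (∀ m ∈ M, (ψ x).2 m ∈ S)) := by
    ext x
    simp only [mem_sdiff, Finset.mem_inf, Finset.mem_sup, mem_filter, mem_univ, true_and]
    constructor
    · rintro ⟨h1, h2⟩
      refine ⟨h1, fun m hm => ?_⟩
      by_contra hc
      exact h2 ⟨m, hm, hc⟩
    · rintro ⟨h1, h2⟩
      exact ⟨h1, fun ⟨m, hm, hc⟩ => hc (h2 m hm)⟩
  rw [hchar]
  rw [Finset.card_equiv ψ (t := (Finset.univ : Finset (Fin d₀)) ×ˢ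
    (Finset.univ.filter (fun π : Equiv.Perm (Fin t) =>
      (∀ l ∈ L, π l ∉ S) ∧ (∀ m ∈ M, π m ∈ S)))) ?_]
  · rw [Finset.card_product, card_univ, Fintype.card_fin, countS]
  · intro x
    simp [Finset.mem_product]

lemma cff_lower {n D : ℕ} (B : Fin t → Finset (Fin n)) (hB : IsCFF r w D n t B) :
    D * (pairsP t r w).card ≤ n * maxBicliqueEdges (biIntGraph t r w) := by
  classical
  have step1 : ∀ p ∈ pairsP t r w, D ≤ ((p.1.inf B) \ (p.2.sup B)).card := fun p hp => by
    rw [mem_pairsP] at hp; exact hB p.1 p.2 hp.2.2 hp.1 hp.2.1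
  have pointbd : ∀ x : Fin n,
      ((pairsP t r w).filter (fun p => x ∈ (p.1.inf B) \ (p.2.sup B))).card
        ≤ maxBicliqueEdges (biIntGraph t r w) := by
    intro x
    set 𝒜 := Finset.univ.filter
      (fun A : Finset (Fin t) => A.card = r ∧ ∀ i ∈ A, x ∈ B i) with h𝒜
    set ℬ := Finset.univ.filter
      (fun C : Finset (Fin t) => C.card = w ∧ ∀ i ∈ C, x ∉ B i) with hℬ
    have hsplit : (pairsP t r w).filter (fun p => x ∈ (p.1.inf B) \ (p.2.sup B))
        = 𝒜 ×ˢ ℬ := by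
      ext p
      rw [mem_filter, mem_pairsP, Finset.mem_product, mem_sdiff, Finset.mem_inf,
        Finset.mem_sup]
      simp only [h𝒜, hℬ, mem_filter, mem_univ, true_and]
      constructor
      · rintro ⟨⟨hc1, hc2, -⟩, h1, h2⟩
        exact ⟨⟨hc1, h1⟩, hc2, fun i hi hx => h2 ⟨i, hi, hx⟩⟩
      · rintro ⟨⟨hc1, h1⟩, hc2, h2⟩
        have hd : Disjoint p.1 p.2 := by
          rw [disjoint_left]
          exact fun a ha hb => h2 a hb (h1 a ha)
        exact ⟨⟨hc1, hc2, hd⟩, h1, fun ⟨i, hi, hx⟩ => h2 i hi hx⟩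
    rw [hsplit, Finset.card_product]
    apply le_maxBicliqueEdges
    refine ⟨𝒜.image Sum.inl, ℬ.image Sum.inr, ?_, ?_, ?_⟩
    · rw [disjoint_left]
      rintro a ha hb
      obtain ⟨A, -, rfl⟩ := mem_image.1 ha
      obtain ⟨C, -, hC⟩ := mem_image.1 hb
      exact absurd hC (by simp)
    · rintro a ha b hb
      obtain ⟨A, hA, rfl⟩ := mem_image.1 ha
      obtain ⟨C, hC, rfl⟩ := mem_image.1 hb
      rw [h𝒜, mem_filter] at hA
      rw [hℬ, mem_filter] at hC
      refine adj_inl_inr.2 ⟨hA.2.1, hC.2.1, disjoint_left.2 ?_⟩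
      exact fun i hiA hiC => hC.2.2 i hiC (hA.2.2 i hiA)
    · rw [card_image_of_injective _ Sum.inl_injective,
        card_image_of_injective _ Sum.inr_injective]
  calc D * (pairsP t r w).card = ∑ _p ∈ pairsP t r w, D := by
        rw [Finset.sum_const, smul_eq_mul, mul_comm]
    _ ≤ ∑ p ∈ pairsP t r w, ((p.1.inf B) \ (p.2.sup B)).card := Finset.sum_le_sum step1
    _ = ∑ p ∈ pairsP t r w, ∑ x : Fin n,
          if x ∈ (p.1.inf B) \ (p.2.sup B) then 1 else 0 := by
        refine Finset.sum_congr rfl (fun p _ => ?_)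
        rw [Finset.sum_ite_mem, Finset.univ_inter, Finset.sum_const, smul_eq_mul, mul_one]
    _ = ∑ x : Fin n, ∑ p ∈ pairsP t r w,
          if x ∈ (p.1.inf B) \ (p.2.sup B) then 1 else 0 := Finset.sum_comm
    _ ≤ ∑ _x : Fin n, maxBicliqueEdges (biIntGraph t r w) := by
        refine Finset.sum_le_sum (fun x _ => ?_)
        rw [← Finset.card_filter]
        exact pointbd x
    _ = n * maxBicliqueEdges (biIntGraph t r w) := by
        rw [Finset.sum_const, card_univ, Fintype.card_fin, smul_eq_mul]

lemma pairsP_nonempty (ht : r + w ≤ t) : (pairsP t r w).Nonempty := by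
  classical
  obtain ⟨C, -, hC⟩ := Finset.exists_subset_card_eq
    (by simpa using ht : r + w ≤ (Finset.univ : Finset (Fin t)).card)
  obtain ⟨L, hLC, hL⟩ := Finset.exists_subset_card_eq (by omega : r ≤ C.card)
  refine ⟨(L, C \ L), mem_pairsP.2 ⟨hL, ?_, disjoint_sdiff⟩⟩
  rw [card_sdiff_of_subset hLC, hC, hL]
  omega

/-- For positive integers `r, w, t, d, d₀` with `w ≤ r`, `t ≥ r + w` and
`d = B(I_t(r,w))·t! / |E(I_t(r,w))|`, we have `N((r,w; d₀·d), t) = d₀·t!`. -/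
theorem cff_exact_value (r w t d d₀ : ℕ) (hw : 0 < w) (hwr : w ≤ r) (ht : r + w ≤ t)
    (hd : 0 < d) (hd₀ : 0 < d₀)
    (hdef : d * Nat.card (biIntGraph t r w).edgeSet
        = maxBicliqueEdges (biIntGraph t r w) * t.factorial) :
    Ncff r w (d₀ * d) t = d₀ * t.factorial := by
  classical
  have hr : 0 < r := lt_of_lt_of_le hw hwr
  rw [Ncff, if_neg (by push_neg; exact ⟨hr.ne', hw.ne'⟩)]
  rw [card_edgeSet_eq] at hdef
  set b := maxBicliqueEdges (biIntGraph t r w) with hb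
  have hPne : 0 < (pairsP t r w).card := Finset.card_pos.2 (pairsP_nonempty ht)
  have hbpos : 0 < b := by
    rcases Nat.eq_zero_or_pos b with h0 | h; swap; · exact h
    rw [h0, zero_mul] at hdef
    have : 0 < d * (pairsP t r w).card := Nat.mul_pos hd hPne
    omega
  obtain ⟨k₀, hk₀, hbk⟩ := exists_max_k (t := t) (r := r) (w := w)
  obtain ⟨S, -, hS⟩ := Finset.exists_subset_card_eq
    (by simpa using hk₀ : k₀ ≤ (Finset.univ : Finset (Fin t)).card)
  have hsum := sum_countS (r := r) (w := w) S
  rw [hS, ← hbk, ← hb] at hsum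
  -- countS is constant = d on all valid pairs
  have hcount : ∀ L M : Finset (Fin t), Disjoint L M → L.card = r → M.card = w →
      countS S L M = d := by
    intro L M hdis hL hM
    have hconst : ∑ p ∈ pairsP t r w, countS S p.1 p.2
        = (pairsP t r w).card * countS S L M := by
      rw [Finset.sum_congr rfl (fun p hp => ?_), Finset.sum_const, smul_eq_mul]
      rw [mem_pairsP] at hp
      exact countS_const S hp.2.2 hdis (hp.1.trans hL.symm) (hp.2.1.trans hM.symm)
    have : (pairsP t r w).card * countS S L M = (pairsP t r w).card * d := by
      rw [← hconst, hsum, mul_comm t.factorial b, ← hdef]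
      ring
    exact Nat.eq_of_mul_eq_mul_left hPne this
  obtain ⟨B, hBcard⟩ := exists_cff S d₀
  have hmem : d₀ * t.factorial ∈
      {n : ℕ | ∃ B : Fin t → Finset (Fin n), IsCFF r w (d₀ * d) n t B} := by
    refine ⟨B, fun L M hdis hL hM => ?_⟩
    rw [hBcard, hcount L M hdis hL hM]
  refine le_antisymm (Nat.sInf_le hmem) ?_
  obtain ⟨B', hB'⟩ := Nat.sInf_mem (⟨_, hmem⟩ : Set.Nonempty _)
  have hlow := cff_lower B' hB'
  have key : b * (d₀ * t.factorial) ≤ b * sInf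
      {n : ℕ | ∃ B : Fin t → Finset (Fin n), IsCFF r w (d₀ * d) n t B} := by
    calc b * (d₀ * t.factorial) = d₀ * (b * t.factorial) := by ring
      _ = d₀ * (d * (pairsP t r w).card) := by rw [hdef]
      _ = (d₀ * d) * (pairsP t r w).card := by ring
      _ ≤ _ * b := hlow
      _ = b * _ := mul_comm _ _
  exact Nat.le_of_mul_le_mul_left key hbpos
end

section
/- For all positive integers r, w, c with w ≤ r, it holds that N((r, w; c·(r+1)!·w!), r+w+1) = c·(r+w+1)!. -/
lemma chooseBound (r w s : ℕ) (hw : 0 < w) (hwr : w ≤ r) :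
    s.choose r * (r + w + 1 - s).choose w ≤ r + 1 := by
  rcases lt_or_ge s r with h | h
  · simp [Nat.choose_eq_zero_of_lt h]
  rcases eq_or_lt_of_le h with h' | h'
  · obtain rfl : s = r := h'.symm
    have h2 : s + w + 1 - s = w + 1 := by omega
    rw [h2, Nat.choose_self, Nat.choose_succ_self_right, one_mul]
    omega
  rcases eq_or_lt_of_le (show r + 1 ≤ s from h') with h'' | h''
  · rw [← h'']
    have h2 : r + w + 1 - (r + 1) = w := by omega
    rw [h2, Nat.choose_succ_self_right, Nat.choose_self, mul_one]
  · have h2 : r + w + 1 - s < w := by omega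
    simp [Nat.choose_eq_zero_of_lt h2]

lemma cff_lower_s17 (r w c n : ℕ) (hw : 0 < w) (hwr : w ≤ r) (hc : 0 < c)
    (B : Fin (r + w + 1) → Finset (Fin n))
    (hB : IsCFF r w (c * (r + 1).factorial * w.factorial) n (r + w + 1) B) :
    c * (r + w + 1).factorial ≤ n := by
  classical
  set d := c * (r + 1).factorial * w.factorial with hd
  -- the family of all pairs (L, M)
  set Pairs : Finset ((_ : Finset (Fin (r + w + 1))) × Finset (Fin (r + w + 1))) :=
    ((Finset.univ : Finset (Fin (r + w + 1))).powersetCard r).sigma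
      (fun L => Lᶜ.powersetCard w) with hPairs
  have hPcard : Pairs.card = (Nat.choose (r + w + 1) r) * (w + 1) := by
    rw [hPairs, Finset.card_sigma]
    have h1 : ∀ L ∈ (Finset.univ : Finset (Fin (r + w + 1))).powersetCard r,
        (Lᶜ.powersetCard w).card = w + 1 := by
      intro L hL
      rw [Finset.mem_powersetCard] at hL
      rw [Finset.card_powersetCard, Finset.card_compl, hL.2, Fintype.card_fin]
      have h2 : r + w + 1 - r = w + 1 := by omega
      rw [h2, Nat.choose_succ_self_right]
    rw [Finset.sum_congr rfl h1, Finset.sum_const, Finset.card_powersetCard,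
      Finset.card_univ, Fintype.card_fin, smul_eq_mul]
  -- every pair demands at least d points
  have hdemand : ∀ p ∈ Pairs, d ≤ ((p.1.inf B) \ (p.2.sup B)).card := by
    intro p hp
    rw [hPairs, Finset.mem_sigma, Finset.mem_powersetCard, Finset.mem_powersetCard] at hp
    exact hB p.1 p.2 (Finset.disjoint_left.mpr fun i hi hi2 =>
      (Finset.mem_compl.mp (hp.2.1 hi2)) hi) hp.1.2 hp.2.2
  -- double counting
  have hsum1 : d * Pairs.card ≤ ∑ p ∈ Pairs, ((p.1.inf B) \ (p.2.sup B)).card := by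
    calc d * Pairs.card = ∑ _p ∈ Pairs, d := by rw [Finset.sum_const, smul_eq_mul, mul_comm]
    _ ≤ _ := Finset.sum_le_sum hdemand
  have hsum2 : ∑ p ∈ Pairs, ((p.1.inf B) \ (p.2.sup B)).card
      = ∑ x : Fin n, (Pairs.filter (fun p => x ∈ (p.1.inf B) \ (p.2.sup B))).card := by
    have h1 : ∀ p ∈ Pairs, ((p.1.inf B) \ (p.2.sup B)).card
        = ∑ x : Fin n, if x ∈ (p.1.inf B) \ (p.2.sup B) then 1 else 0 := by
      intro p _
      rw [← Finset.card_filter]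
      congr 1
      ext x
      simp
    rw [Finset.sum_congr rfl h1, Finset.sum_comm]
    refine Finset.sum_congr rfl fun x _ => ?_
    rw [Finset.card_filter]
  -- each point serves at most r+1 pairs
  have hserve : ∀ x : Fin n,
      (Pairs.filter (fun p => x ∈ (p.1.inf B) \ (p.2.sup B))).card ≤ r + 1 := by
    intro x
    set S : Finset (Fin (r + w + 1)) := Finset.univ.filter (fun i => x ∈ B i) with hS
    have hmemS : ∀ i, i ∈ S ↔ x ∈ B i := by intro i; simp [hS]
    have heq : Pairs.filter (fun p => x ∈ (p.1.inf B) \ (p.2.sup B))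
        = (S.powersetCard r).sigma (fun _ => Sᶜ.powersetCard w) := by
      ext p
      rw [Finset.mem_filter, hPairs, Finset.mem_sigma, Finset.mem_sigma,
        Finset.mem_powersetCard, Finset.mem_powersetCard, Finset.mem_powersetCard,
        Finset.mem_powersetCard, Finset.mem_sdiff, Finset.mem_inf, Finset.mem_sup]
      constructor
      · rintro ⟨⟨⟨-, hL⟩, hMc, hM⟩, hin, hout⟩
        refine ⟨⟨fun i hi => (hmemS i).mpr (hin i hi), hL⟩,
          fun i hi => Finset.mem_compl.mpr (fun hiS => hout ⟨i, hi, (hmemS i).mp hiS⟩), hM⟩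
      · rintro ⟨⟨hLS, hL⟩, hMS, hM⟩
        have hMc : p.2 ⊆ p.1ᶜ := fun i hi => Finset.mem_compl.mpr
          (fun hiL => Finset.mem_compl.mp (hMS hi) (hLS hiL))
        exact ⟨⟨⟨Finset.subset_univ _, hL⟩, hMc, hM⟩,
          fun i hi => (hmemS i).mp (hLS hi),
          fun ⟨i, hi, hxB⟩ => Finset.mem_compl.mp (hMS hi) ((hmemS i).mpr hxB)⟩
    rw [heq, Finset.card_sigma]
    have hc' : ∀ L ∈ S.powersetCard r,
        (Sᶜ.powersetCard w).card = (r + w + 1 - S.card).choose w := by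
      intro L _
      rw [Finset.card_powersetCard, Finset.card_compl, Fintype.card_fin]
    rw [Finset.sum_congr rfl hc', Finset.sum_const, Finset.card_powersetCard, smul_eq_mul]
    exact chooseBound r w S.card hw hwr
  -- combine
  have hmain : d * ((Nat.choose (r + w + 1) r) * (w + 1)) ≤ n * (r + 1) := by
    calc d * ((Nat.choose (r + w + 1) r) * (w + 1)) = d * Pairs.card := by rw [hPcard]
    _ ≤ ∑ p ∈ Pairs, ((p.1.inf B) \ (p.2.sup B)).card := hsum1
    _ = ∑ x : Fin n, (Pairs.filter (fun p => x ∈ (p.1.inf B) \ (p.2.sup B))).card := hsum2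
    _ ≤ ∑ _x : Fin n, (r + 1) := Finset.sum_le_sum fun x _ => hserve x
    _ = n * (r + 1) := by rw [Finset.sum_const, Finset.card_univ, Fintype.card_fin, smul_eq_mul]
  have hkey : Nat.choose (r + w + 1) r * r.factorial * (w + 1).factorial
      = (r + w + 1).factorial := by
    have h1 : r + w + 1 - r = w + 1 := by omega
    have h2 := Nat.choose_mul_factorial_mul_factorial (n := r + w + 1) (k := r) (by omega)
    rwa [h1] at h2
  have e1 : d * ((Nat.choose (r + w + 1) r) * (w + 1))
      = (r + 1) * (c * (r + w + 1).factorial) := by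
    rw [hd, ← hkey, Nat.factorial_succ r, Nat.factorial_succ w]
    ring
  rw [e1] at hmain
  exact Nat.le_of_mul_le_mul_left (by linarith [hmain]) (by omega : 0 < r + 1)

lemma cff_upper (r w c : ℕ) (hw : 0 < w) (hwr : w ≤ r) (hc : 0 < c) :
    ∃ B : Fin (r + w + 1) → Finset (Fin (c * (r + w + 1).factorial)),
      IsCFF r w (c * (r + 1).factorial * w.factorial) (c * (r + w + 1).factorial)
        (r + w + 1) B := by
  classical
  set d := c * (r + 1).factorial * w.factorial with hd
  set n := c * (r + w + 1).factorial with hn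
  have hcard : Fintype.card (Fin n)
      = Fintype.card ({S : Finset (Fin (r + w + 1)) // S.card = r + 1} × Fin d) := by
    rw [Fintype.card_fin, Fintype.card_prod, Fintype.card_fin, Fintype.card_finset_len,
      Fintype.card_fin]
    have h1 : r + w + 1 - (r + 1) = w := by omega
    have hkey := Nat.choose_mul_factorial_mul_factorial (n := r + w + 1) (k := r + 1) (by omega)
    rw [h1] at hkey
    rw [hn, hd, ← hkey]
    ring
  obtain e := Fintype.equivOfCardEq hcard
  refine ⟨fun i => Finset.univ.filter (fun x => i ∈ ((e x).1 : Finset (Fin (r + w + 1)))), ?_⟩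
  intro L M hdisj hL hM
  have hLM : (L ∪ M).card = r + w := by
    rw [Finset.card_union_of_disjoint hdisj, hL, hM]
  have hcompl : ((L ∪ M)ᶜ : Finset (Fin (r + w + 1))).Nonempty := by
    rw [← Finset.card_pos, Finset.card_compl, hLM, Fintype.card_fin]
    omega
  obtain ⟨j, hj⟩ := hcompl
  rw [Finset.mem_compl, Finset.mem_union] at hj
  push_neg at hj
  have hjL : j ∉ L := hj.1
  have hjM : j ∉ M := hj.2
  set S₀ : Finset (Fin (r + w + 1)) := insert j L with hS₀
  have hS₀card : S₀.card = r + 1 := by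
    rw [hS₀, Finset.card_insert_of_notMem hjL, hL]
  set s0 : {S : Finset (Fin (r + w + 1)) // S.card = r + 1} := ⟨S₀, hS₀card⟩ with hs0
  have hsub : Finset.univ.filter (fun x : Fin n => (e x).1 = s0)
      ⊆ (L.inf (fun i => Finset.univ.filter (fun x => i ∈ ((e x).1 : Finset (Fin (r + w + 1))))))
        \ (M.sup (fun i => Finset.univ.filter
            (fun x => i ∈ ((e x).1 : Finset (Fin (r + w + 1)))))) := by
    intro x hx
    rw [Finset.mem_filter] at hx
    have hx1 : ((e x).1 : Finset (Fin (r + w + 1))) = S₀ := by rw [hx.2]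
    rw [Finset.mem_sdiff, Finset.mem_inf, Finset.mem_sup]
    constructor
    · intro i hi
      rw [Finset.mem_filter, hx1]
      exact ⟨Finset.mem_univ _, Finset.mem_insert_of_mem hi⟩
    · rintro ⟨i, hi, hxB⟩
      rw [Finset.mem_filter, hx1, Finset.mem_insert] at hxB
      rcases hxB.2 with h | h
      · exact hjM (h ▸ hi)
      · exact Finset.disjoint_left.mp hdisj h hi
  have hcount : (Finset.univ.filter (fun x : Fin n => (e x).1 = s0)).card = d := by
    have h1 : (Finset.univ.filter (fun x : Fin n => (e x).1 = s0)).card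
        = (Finset.univ : Finset (Fin d)).card := by
      refine Finset.card_bij' (fun x _ => (e x).2) (fun y _ => e.symm (s0, y)) ?_ ?_ ?_ ?_
      · intro a ha; exact Finset.mem_univ _
      · intro b hb
        rw [Finset.mem_filter]
        exact ⟨Finset.mem_univ _, by rw [Equiv.apply_symm_apply]⟩
      · intro a ha
        rw [Finset.mem_filter] at ha
        show e.symm (s0, (e a).2) = a
        rw [Equiv.symm_apply_eq]
        exact Prod.ext ha.2.symm rfl
      · intro b hb
        show (e (e.symm (s0, b))).2 = b
        rw [Equiv.apply_symm_apply]
    rw [h1, Finset.card_univ, Fintype.card_fin]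
  calc d = (Finset.univ.filter (fun x : Fin n => (e x).1 = s0)).card := hcount.symm
  _ ≤ _ := Finset.card_le_card hsub

/-- For positive integers `r, w, c` with `w ≤ r`,
`N((r, w; c·(r+1)!·w!), r+w+1) = c·(r+w+1)!`. -/
theorem cff_exact_value_small (r w c : ℕ) (hw : 0 < w) (hwr : w ≤ r) (hc : 0 < c) :
    Ncff r w (c * (r + 1).factorial * w.factorial) (r + w + 1)
      = c * (r + w + 1).factorial := by
  rw [Ncff, if_neg (by omega)]
  apply le_antisymm
  · exact Nat.sInf_le (cff_upper r w c hw hwr hc)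
  · have hne : {n : ℕ | ∃ B : Fin (r + w + 1) → Finset (Fin n),
        IsCFF r w (c * (r + 1).factorial * w.factorial) n (r + w + 1) B}.Nonempty :=
      ⟨c * (r + w + 1).factorial, cff_upper r w c hw hwr hc⟩
    refine le_csInf hne fun m hm => ?_
    obtain ⟨B, hB⟩ := hm
    exact cff_lower_s17 r w c m hw hwr hc B hB
end

section
/- Let d be a positive integer such that there exists a Hadamard matrix of order 4d. Then N((1,1;d), 4d−1) = 4d−1. -/
open Finset

open Finset

lemma pair_bound (d k m : ℕ) (hd : 0 < d) (h : k + m + 1 = 4 * d) :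
    k * m ≤ 2 * d * (2 * d - 1) := by
  have key : (0:ℤ) ≤ ((k:ℤ) - (2*d-1)) * ((k:ℤ) - 2*d) := by
    rcases le_or_gt (k:ℤ) (2*(d:ℤ)-1) with h1 | h1
    · have : (0:ℤ) ≤ (2*(d:ℤ)-1 - k) * (2*d - k) :=
        mul_nonneg (by linarith) (by linarith)
      nlinarith
    · exact mul_nonneg (by linarith) (by linarith)
  have hm : (k:ℤ) + m + 1 = 4*d := by exact_mod_cast h
  zify [show (1:ℕ) ≤ 2*d by omega]
  nlinarith

lemma lower_bound (d n : ℕ) (hd : 0 < d) (B : Fin (4*d-1) → Finset (Fin n))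
    (hB : ∀ i j : Fin (4*d-1), i ≠ j → d ≤ (B i \ B j).card) : 4*d - 1 ≤ n := by
  set a : Fin (4*d-1) → Fin n → ℕ := fun i x => if x ∈ B i then 1 else 0 with ha
  set b : Fin (4*d-1) → Fin n → ℕ := fun i x => if x ∈ B i then 0 else 1 with hb
  have key : ∀ (i j : Fin (4*d-1)), (B i \ B j).card = ∑ x : Fin n, a i x * b j x := by
    intro i j
    rw [← Finset.filter_univ_mem (B i \ B j), Finset.card_filter]
    refine Finset.sum_congr rfl fun x _ => ?_
    by_cases h1 : x ∈ B i <;> by_cases h2 : x ∈ B j <;>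
      simp [ha, hb, h1, h2, Finset.mem_sdiff]
  have lowerS : (4*d-1) * ((4*d-2) * d) ≤ ∑ i : Fin (4*d-1), ∑ j : Fin (4*d-1), (B i \ B j).card := by
    rw [show (4*d-1) * ((4*d-2)*d) = ∑ _i : Fin (4*d-1), (4*d-2)*d by
      simp [Finset.sum_const, Finset.card_univ, mul_comm]]
    refine Finset.sum_le_sum fun i _ => ?_
    calc (4*d-2) * d = ∑ _j ∈ Finset.univ.erase i, d := by
          simp only [Finset.sum_const, Finset.card_erase_of_mem (Finset.mem_univ i),
            Finset.card_univ, Fintype.card_fin, smul_eq_mul]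
          congr 1
      _ ≤ ∑ j ∈ Finset.univ.erase i, (B i \ B j).card := by
          refine Finset.sum_le_sum fun j hj => ?_
          exact hB i j (Ne.symm (Finset.ne_of_mem_erase hj))
      _ ≤ ∑ j : Fin (4*d-1), (B i \ B j).card :=
          Finset.sum_le_sum_of_subset (Finset.subset_univ _)
  have upperS : ∑ i : Fin (4*d-1), ∑ j : Fin (4*d-1), (B i \ B j).card ≤ n * (2*d*(2*d-1)) := by
    have swap : ∑ i : Fin (4*d-1), ∑ j : Fin (4*d-1), (B i \ B j).card
        = ∑ x : Fin n, (∑ i : Fin (4*d-1), a i x) * (∑ j : Fin (4*d-1), b j x) := by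
      simp only [key]
      calc ∑ i : Fin (4*d-1), ∑ j : Fin (4*d-1), ∑ x : Fin n, a i x * b j x
          = ∑ i : Fin (4*d-1), ∑ x : Fin n, ∑ j : Fin (4*d-1), a i x * b j x := by
            exact Finset.sum_congr rfl fun i _ => Finset.sum_comm
        _ = ∑ x : Fin n, ∑ i : Fin (4*d-1), ∑ j : Fin (4*d-1), a i x * b j x :=
            Finset.sum_comm
        _ = ∑ x : Fin n, (∑ i : Fin (4*d-1), a i x) * (∑ j : Fin (4*d-1), b j x) := by
            exact Finset.sum_congr rfl fun x _ => (Finset.sum_mul_sum _ _ _ _).symm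
    rw [swap]
    calc ∑ x : Fin n, (∑ i : Fin (4*d-1), a i x) * (∑ j : Fin (4*d-1), b j x)
        ≤ ∑ _x : Fin n, 2*d*(2*d-1) := by
          refine Finset.sum_le_sum fun x _ => ?_
          refine pair_bound d _ _ hd ?_
          have : (∑ i : Fin (4*d-1), a i x) + (∑ j : Fin (4*d-1), b j x)
              = ∑ i : Fin (4*d-1), (a i x + b i x) := (Finset.sum_add_distrib).symm
          rw [this]
          have : ∀ i : Fin (4*d-1), a i x + b i x = 1 := by
            intro i; by_cases h1 : x ∈ B i <;> simp [ha, hb, h1]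
          simp only [this, Finset.sum_const, Finset.card_univ, Fintype.card_fin, smul_eq_mul,
            mul_one]
          omega
      _ = n * (2*d*(2*d-1)) := by
          simp [Finset.sum_const, Finset.card_univ]
  have hfin : (4*d-1) * ((4*d-2) * d) ≤ n * (2*d*(2*d-1)) := le_trans lowerS upperS
  obtain ⟨e, rfl⟩ : ∃ e, d = e + 1 := ⟨d - 1, by omega⟩
  have h1 : (4*(e+1)-1) * ((4*(e+1)-2) * (e+1)) = (4*(e+1)-1) * (2*(e+1)*(2*(e+1)-1)) := by
    have e1 : 4*(e+1)-2 = 2*(2*e+1) := by omega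
    have e2 : 2*(e+1)-1 = 2*e+1 := by omega
    rw [e1, e2]; ring
  rw [h1] at hfin
  have hpos : 0 < 2*(e+1)*(2*(e+1)-1) := by
    have : 2*(e+1)-1 = 2*e+1 := by omega
    rw [this]; positivity
  exact Nat.le_of_mul_le_mul_right hfin hpos


lemma exists_cff_s18 (d : ℕ) (hd : 0 < d)
    (hH : ∃ H : Matrix (Fin (4 * d)) (Fin (4 * d)) ℝ,
      (∀ i j, H i j = 1 ∨ H i j = -1) ∧ H * H.transpose = (4 * d : ℝ) • 1) :
    ∃ B : Fin (4*d-1) → Finset (Fin (4*d-1)),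
      ∀ i j : Fin (4*d-1), i ≠ j → d ≤ (B i \ B j).card := by
  obtain ⟨H, hpm, horth⟩ := hH
  set z : Fin (4*d) := ⟨0, by omega⟩ with hz
  have hsq : ∀ i j, H i j * H i j = 1 := by
    intro i j; rcases hpm i j with h | h <;> rw [h] <;> norm_num
  -- orthogonality of rows of H
  have hrow : ∀ i k : Fin (4*d), ∑ c : Fin (4*d), H i c * H k c
      = if i = k then (4*d : ℝ) else 0 := by
    intro i k
    have := congrFun (congrFun (congrArg (fun M => M) horth) i) k
    have h2 : (H * H.transpose) i k = ∑ c : Fin (4*d), H i c * H k c := by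
      rw [Matrix.mul_apply]; simp [Matrix.transpose_apply]
    have h3 : ((4*d : ℝ) • (1 : Matrix (Fin (4*d)) (Fin (4*d)) ℝ)) i k
        = if i = k then (4*d:ℝ) else 0 := by
      simp [Matrix.smul_apply, Matrix.one_apply, mul_ite]
    rw [← h2, ← h3, horth]
  -- normalized matrix
  set G : Fin (4*d) → Fin (4*d) → ℝ := fun i j => H i j * H z j * H i z * H z z with hg
  have hGpm : ∀ i j, G i j = 1 ∨ G i j = -1 := by
    intro i j
    rcases hpm i j with h1 | h1 <;> rcases hpm z j with h2 | h2 <;>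
      rcases hpm i z with h3 | h3 <;> rcases hpm z z with h4 | h4 <;>
      simp [hg, h1, h2, h3, h4] <;> norm_num
  have hGrow0 : ∀ j, G z j = 1 := by
    intro j
    show H z j * H z j * H z z * H z z = 1
    rw [hsq]; rw [one_mul, hsq]
  have hGcol0 : ∀ i, G i z = 1 := by
    intro i
    show H i z * H z z * H i z * H z z = 1
    have : H i z * H z z * H i z * H z z = (H i z * H i z) * (H z z * H z z) := by ring
    rw [this, hsq, hsq, one_mul]
  have hGorth : ∀ i k : Fin (4*d), i ≠ k → ∑ c : Fin (4*d), G i c * G k c = 0 := by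
    intro i k hik
    have : ∀ c, G i c * G k c = (H i z * H k z) * (H i c * H k c) := by
      intro c
      show (H i c * H z c * H i z * H z z) * (H k c * H z c * H k z * H z z)
          = (H i z * H k z) * (H i c * H k c)
      have e : (H i c * H z c * H i z * H z z) * (H k c * H z c * H k z * H z z)
          = (H z c * H z c) * ((H z z * H z z) * ((H i z * H k z) * (H i c * H k c))) := by
        ring
      rw [e, hsq, hsq]; ring
    rw [Finset.sum_congr rfl fun c _ => this c, ← Finset.mul_sum, hrow, if_neg hik, mul_zero]
  -- row sums of G are zero for i ≠ z
  have hGsum : ∀ i : Fin (4*d), i ≠ z → ∑ c : Fin (4*d), G i c = 0 := by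
    intro i hi
    have := hGorth i z hi
    simpa [hGrow0] using this
  -- the embedding Fin (4d-1) → Fin (4d)
  set ι : Fin (4*d-1) → Fin (4*d) := fun x => ⟨x.val + 1, by omega⟩ with hι
  have hιne : ∀ x, ι x ≠ z := by
    intro x h
    have : x.val + 1 = 0 := congrArg Fin.val h
    omega
  have hιinj : Function.Injective ι := by
    intro x y h
    have : x.val + 1 = y.val + 1 := congrArg Fin.val h
    exact Fin.ext (by omega)
  -- the blocks
  refine ⟨fun i => Finset.univ.filter (fun x => G (ι i) (ι x) = 1), fun i j hij => ?_⟩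
  have hij' : ι i ≠ ι j := fun h => hij (hιinj h)
  -- count over the big set
  set T : Finset (Fin (4*d)) :=
    Finset.univ.filter (fun c => G (ι i) c = 1 ∧ G (ι j) c = -1) with hT
  have hcardT : (T.card : ℝ) = d := by
    have e0 : (T.card : ℝ) = ∑ c : Fin (4*d),
        (if G (ι i) c = 1 ∧ G (ι j) c = -1 then (1:ℝ) else 0) := by
      rw [Finset.sum_boole, hT]
    have e1 : ∀ c : Fin (4*d), (if G (ι i) c = 1 ∧ G (ι j) c = -1 then (1:ℝ) else 0)
        = (1 + G (ι i) c) * (1 - G (ι j) c) / 4 := by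
      intro c
      rcases hGpm (ι i) c with h1 | h1 <;> rcases hGpm (ι j) c with h2 | h2 <;>
        rw [h1, h2] <;> norm_num
    rw [e0, Finset.sum_congr rfl fun c _ => e1 c]
    have expand : ∀ c : Fin (4*d), (1 + G (ι i) c) * (1 - G (ι j) c) / 4
        = (1 + G (ι i) c - G (ι j) c - G (ι i) c * G (ι j) c) / 4 := by
      intro c; ring
    rw [Finset.sum_congr rfl fun c _ => expand c, ← Finset.sum_div]
    have s1 : ∑ c : Fin (4*d), (1 + G (ι i) c - G (ι j) c - G (ι i) c * G (ι j) c)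
        = (4*d : ℝ) := by
      rw [Finset.sum_sub_distrib, Finset.sum_sub_distrib, Finset.sum_add_distrib]
      rw [hGsum _ (hιne i), hGsum _ (hιne j), hGorth _ _ hij']
      simp [Finset.card_univ]
    rw [s1]; ring
  have hcardT' : T.card = d := by exact_mod_cast hcardT
  -- bijection between B i \ B j and T
  have hbij : ((Finset.univ.filter (fun x => G (ι i) (ι x) = 1)) \
      (Finset.univ.filter (fun x => G (ι j) (ι x) = 1))).card = T.card := by
    apply Finset.card_bij (fun x _ => ι x)
    · intro x hx
      rw [Finset.mem_sdiff, Finset.mem_filter, Finset.mem_filter] at hx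
      rw [hT, Finset.mem_filter]
      refine ⟨Finset.mem_univ _, hx.1.2, ?_⟩
      rcases hGpm (ι j) (ι x) with h | h
      · exact absurd ⟨Finset.mem_univ _, h⟩ hx.2
      · exact h
    · intro x _ y _ h; exact hιinj h
    · intro c hc
      rw [hT, Finset.mem_filter] at hc
      have hcz : c ≠ z := by
        intro h
        have h2 := hc.2.2
        rw [h, hGcol0] at h2
        norm_num at h2
      have hcval : 1 ≤ c.val := by
        rcases Nat.eq_zero_or_pos c.val with h | h
        · exact absurd (Fin.ext h : c = z) hcz
        · omega
      refine ⟨⟨c.val - 1, by omega⟩, ?_, ?_⟩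
      · have hc' : ι ⟨c.val - 1, by omega⟩ = c := Fin.ext (by simp [hι]; omega)
        rw [Finset.mem_sdiff, Finset.mem_filter, Finset.mem_filter, hc']
        refine ⟨⟨Finset.mem_univ _, hc.2.1⟩, ?_⟩
        intro hmem
        have h2 := hmem.2
        rw [hc.2.2] at h2
        norm_num at h2
      · exact Fin.ext (by simp [hι]; omega)
  rw [hbij, hcardT']


/-- If there exists a Hadamard matrix of order `4d` (with `d > 0`), then
`N((1,1;d), 4d−1) = 4d−1`. -/
theorem cff_hadamard (d : ℕ) (hd : 0 < d)
    (hH : ∃ H : Matrix (Fin (4 * d)) (Fin (4 * d)) ℝ,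
      (∀ i j, H i j = 1 ∨ H i j = -1) ∧ H * H.transpose = (4 * d : ℝ) • 1) :
    Ncff 1 1 d (4 * d - 1) = 4 * d - 1 := by
  have hpair : ∀ n (B : Fin (4*d-1) → Finset (Fin n)), IsCFF 1 1 d n (4*d-1) B →
      ∀ i j, i ≠ j → d ≤ (B i \ B j).card := by
    intro n B hB i j hij
    have := hB {i} {j} (Finset.disjoint_singleton.mpr hij)
      (Finset.card_singleton i) (Finset.card_singleton j)
    simpa using this
  obtain ⟨B, hB⟩ := exists_cff_s18 d hd hH
  have hmem : (4*d-1) ∈ {n : ℕ | ∃ B : Fin (4*d-1) → Finset (Fin n), IsCFF 1 1 d n (4*d-1) B} := by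
    refine ⟨B, ?_⟩
    intro L M hdisj hL hM
    obtain ⟨i, rfl⟩ := Finset.card_eq_one.mp hL
    obtain ⟨j, rfl⟩ := Finset.card_eq_one.mp hM
    have hij : i ≠ j := by
      have h' : ¬ j = i := fun h => (by simpa using hdisj : ¬ i = j) h.symm
      exact fun h => h' h.symm
    simpa using hB i j hij
  rw [Ncff, if_neg (by simp)]
  refine le_antisymm (Nat.sInf_le hmem) (le_csInf ⟨_, hmem⟩ ?_)
  intro n hn
  obtain ⟨B', hB'⟩ := hn
  exact lower_bound d n hd B' (hpair n B' hB')
end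

section
/- Let g, h, r, w be positive integers and let {(A₁,B₁), …, (A_g,B_g)} be a family of pairs of subsets of an h-element ground set. For 1 ≤ i ≤ h define S_i = { j : i ∈ A_j } and T_i = { j : i ∈ B_j }. Then {(A₁,B₁), …, (A_g,B_g)} is a weakly cross-intersecting set-pairs with |A_j| ≤ r and |B_j| ≤ w for all j if and only if the pairs (S₁,T₁), …, (S_h,T_h) form an (r,w)-biclique cover of size h of the complete graph K_g on vertex set {1,…,g}. -/
/-- Duality: `{(A_j, B_j)}_{j<g}` is a weakly cross-intersecting set-pairs on an
`h`-element ground set with `|A_j| ≤ r` and `|B_j| ≤ w` for all `j` iff the dual pairs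
`S_i = {j : i ∈ A_j}`, `T_i = {j : i ∈ B_j}` form an `(r,w)`-biclique cover of size `h`
of the complete graph `K_g`: each `(S_i, T_i)` is a biclique of `K_g`, every edge of
`K_g` is covered, and every vertex lies in at most `r` of the `S_i` and at most `w`
of the `T_i`. -/
theorem weakly_cross_intersecting_iff_dual_biclique_cover
    (g h r w : ℕ) (hg : 0 < g) (hh : 0 < h) (hr : 0 < r) (hw : 0 < w)
    (A B : Fin g → Finset (Fin h))
    (S : Fin h → Finset (Fin g)) (T : Fin h → Finset (Fin g))
    (hS : ∀ i, S i = Finset.univ.filter (fun j => i ∈ A j))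
    (hT : ∀ i, T i = Finset.univ.filter (fun j => i ∈ B j)) :
    ((∀ j, Disjoint (A j) (B j)) ∧
       (∀ j k, j ≠ k → ((A j ∩ B k) ∪ (A k ∩ B j)).Nonempty) ∧
       (∀ j, (A j).card ≤ r) ∧ (∀ j, (B j).card ≤ w))
    ↔
    ((∀ i, Disjoint (S i) (T i)) ∧
       (∀ i, ∀ x ∈ S i, ∀ y ∈ T i, (⊤ : SimpleGraph (Fin g)).Adj x y) ∧
       (∀ x y : Fin g, (⊤ : SimpleGraph (Fin g)).Adj x y →
         ∃ i, (x ∈ S i ∧ y ∈ T i) ∨ (y ∈ S i ∧ x ∈ T i)) ∧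
       (∀ v : Fin g, (Finset.univ.filter (fun i => v ∈ S i)).card ≤ r) ∧
       (∀ v : Fin g, (Finset.univ.filter (fun i => v ∈ T i)).card ≤ w)) := by
  have hSm : ∀ i v, v ∈ S i ↔ i ∈ A v := by
    intro i v; rw [hS]; simp
  have hTm : ∀ i v, v ∈ T i ↔ i ∈ B v := by
    intro i v; rw [hT]; simp
  have hcardS : ∀ v, (Finset.univ.filter (fun i => v ∈ S i)) = A v := by
    intro v; ext i; simp [hSm]
  have hcardT : ∀ v, (Finset.univ.filter (fun i => v ∈ T i)) = B v := by
    intro v; ext i; simp [hTm]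
  constructor
  · rintro ⟨hdisj, hcross, hA, hB⟩
    refine ⟨?_, ?_, ?_, ?_, ?_⟩
    · intro i
      rw [Finset.disjoint_left]
      intro v hv hv'
      exact (Finset.disjoint_left.mp (hdisj v)) ((hSm i v).mp hv) ((hTm i v).mp hv')
    · intro i x hx y hy
      simp only [SimpleGraph.top_adj]
      rintro rfl
      exact (Finset.disjoint_left.mp (hdisj x)) ((hSm i x).mp hx) ((hTm i x).mp hy)
    · intro x y hxy
      obtain ⟨i, hi⟩ := hcross x y ((SimpleGraph.top_adj _ _).mp hxy)
      simp only [Finset.mem_union, Finset.mem_inter] at hi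
      rcases hi with ⟨h1, h2⟩ | ⟨h1, h2⟩
      · exact ⟨i, Or.inl ⟨(hSm i x).mpr h1, (hTm i y).mpr h2⟩⟩
      · exact ⟨i, Or.inr ⟨(hSm i y).mpr h1, (hTm i x).mpr h2⟩⟩
    · intro v; rw [hcardS]; exact hA v
    · intro v; rw [hcardT]; exact hB v
  · rintro ⟨hdisj, hbic, hcov, hA, hB⟩
    refine ⟨?_, ?_, ?_, ?_⟩
    · intro j
      rw [Finset.disjoint_left]
      intro i hi hi'
      exact (Finset.disjoint_left.mp (hdisj i)) ((hSm i j).mpr hi) ((hTm i j).mpr hi')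
    · intro j k hjk
      obtain ⟨i, hi⟩ := hcov j k ((SimpleGraph.top_adj _ _).mpr hjk)
      rcases hi with ⟨h1, h2⟩ | ⟨h1, h2⟩
      · exact ⟨i, Finset.mem_union.mpr (Or.inl (Finset.mem_inter.mpr
          ⟨(hSm i j).mp h1, (hTm i k).mp h2⟩))⟩
      · exact ⟨i, Finset.mem_union.mpr (Or.inr (Finset.mem_inter.mpr
          ⟨(hSm i k).mp h1, (hTm i j).mp h2⟩))⟩
    · intro j; rw [← hcardS]; exact hA j
    · intro j; rw [← hcardT]; exact hB j
end
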